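/- Let 𝓕 and 𝓕′ be two finite families of finite sets such that every element of 𝓕 can be expressed as the intersection of a nonempty subfamily of 𝓕′. Then 𝔣𝔯(𝓕) ≤ 𝔣𝔯(𝓕′). -/

import Mathlib

open Cardinal

noncomputable section

/-- The underlying set of the ordinal `ω_n`, the least ordinal of cardinality `ℵ_n`,
realized as a type. -/
abbrev OmegaN (n : ℕ) : Type := ((Cardinal.aleph n).ord).ToType

/-- `n` is *free* for the family `𝓕` of finite sets: for every set mapping
`S : [ω_n]^{<ω} → [ω_n]^{<ω}` there is a bijection `u` from `⋃ 𝓕` onto a subset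
`Y = u '' (⋃ 𝓕)` of `ω_n` such that `S (u '' A) ∩ Y ⊆ u '' A` for all `A ∈ 𝓕`. -/
def IsFree {α : Type*} [DecidableEq α] (𝓕 : Finset (Finset α)) (n : ℕ) : Prop :=
  ∀ S : Finset (OmegaN n) → Finset (OmegaN n),
    ∃ u : α → OmegaN n, Set.InjOn u ↑(𝓕.sup id) ∧
      ∀ A ∈ 𝓕, S (A.image u) ∩ (𝓕.sup id).image u ⊆ A.image u

/-- The index `𝔣𝔯 𝓕`: the least `n` which is free for `𝓕`. -/
noncomputable def fr {α : Type*} [DecidableEq α] (𝓕 : Finset (Finset α)) : ℕ :=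
  sInf {n | IsFree 𝓕 n}

/-- Conditions (1)–(4) of a nested-orders family on `X`,
where a sequence `(t₁, …, t_k)` is represented by the list `[t₁, …, t_k]`. -/
def NestedBase {α : Type*} (X : Set α) (S : Set (List α)) : Prop :=
  (∀ l ∈ S, ∀ x ∈ l, x ∈ X) ∧
  (∀ t ∈ X, [t] ∈ S) ∧
  (∀ l ∈ S, l.Nodup) ∧
  (∀ (l : List α) (t : α), l ++ [t] ∈ S → l ∈ S) ∧
  (∀ (l : List α) (s t : α), l ++ [s, t] ∈ S → l ++ [t] ∈ S) ∧
  (∀ (l : List α) (s t u : α), l ++ [s, t] ∈ S → l ++ [t, u] ∈ S → l ++ [s, u] ∈ S)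

/-- A nested-orders family on `X`: conditions (1)–(5). -/
def IsNestedOrders {α : Type*} (X : Set α) (S : Set (List α)) : Prop :=
  NestedBase X S ∧
  ∀ (l : List α) (s t : α), l ++ [t] ∈ S → l ++ [s] ∈ S → t ≠ s →
    (l ++ [t, s] ∈ S ∨ l ++ [s, t] ∈ S)

/-- An `n`-nested-orders family on `X`: sequences of length at most `n+2`,
conditions (1)–(4), and condition (5) for `k < n`. -/
def IsNNestedOrders {α : Type*} (n : ℕ) (X : Set α) (S : Set (List α)) : Prop :=
  NestedBase X S ∧
  (∀ l ∈ S, l.length ≤ n + 2) ∧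
  ∀ (l : List α) (s t : α), l.length < n → l ++ [t] ∈ S → l ++ [s] ∈ S → t ≠ s →
    (l ++ [t, s] ∈ S ∨ l ++ [s, t] ∈ S)

/-- `A` satisfies the defining condition of membership in `𝓕_{𝔖,n}`: whenever
`(t₁, …, t_{n+2}) ∈ 𝔖` and `t₁, …, t_{n+1} ∈ A`, also `t_{n+2} ∈ A`. -/
def MemFam {α : Type*} (n : ℕ) (S : Set (List α)) (A : Finset α) : Prop :=
  ∀ (l : List α) (t : α), l.length = n + 1 → l ++ [t] ∈ S →
    (∀ x ∈ l, x ∈ A) → t ∈ A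

/-- The index `𝔫𝔬 𝓕`: the least `n` for which there is an `n`-nested-orders family `𝔖`
on `⋃ 𝓕` with `𝓕 ⊆ 𝓕_{𝔖,n}`. -/
noncomputable def no {α : Type*} [DecidableEq α] (𝓕 : Finset (Finset α)) : ℕ :=
  sInf {n | ∃ S : Set (List α),
    IsNNestedOrders n ↑(𝓕.sup id) S ∧ ∀ A ∈ 𝓕, MemFam n S A}

lemma mk_omegaN (n : ℕ) : #(OmegaN n) = Cardinal.aleph n := by
  rw [Cardinal.mk_toType, Cardinal.card_ord]

instance omegaN_nonempty (n : ℕ) : Nonempty (OmegaN n) := by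
  rw [← Cardinal.mk_ne_zero_iff, mk_omegaN]
  exact (Cardinal.aleph_pos _).ne'

/-- A monotone chain of sets in `OmegaN m` with `#(C i) = ℵ_i` for `i ≤ m`. -/
lemma exists_chain (m : ℕ) : ∃ C : ℕ → Set (OmegaN m), Monotone C ∧
    (∀ i ≤ m, Cardinal.aleph i ≤ #(C i)) ∧ (∀ i ≤ m, #(C i) ≤ Cardinal.aleph i) := by
  have hs : ∀ i : ℕ, ∃ s : Set (OmegaN m), #s = Cardinal.aleph ((min i m : ℕ) : Ordinal) := by
    intro i
    refine Cardinal.le_mk_iff_exists_set.mp ?_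
    rw [mk_omegaN]
    exact Cardinal.aleph_le_aleph.mpr (by exact_mod_cast min_le_right i m : ((min i m : ℕ) : Ordinal) ≤ (m : Ordinal))
  choose t ht using hs
  refine ⟨fun i => ⋃ k : Fin (i + 1), t k, ?_, ?_, ?_⟩
  · intro a b hab x hx
    obtain ⟨k, hk⟩ := Set.mem_iUnion.mp hx
    exact Set.mem_iUnion.mpr ⟨⟨(k : ℕ), by omega⟩, hk⟩
  · intro i him
    have h1 : t i ⊆ ⋃ k : Fin (i + 1), t k :=
      Set.subset_iUnion (fun k : Fin (i + 1) => t (k : ℕ)) ⟨i, by omega⟩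
    calc Cardinal.aleph i = #(t i) := by rw [ht i, min_eq_left him]
    _ ≤ _ := Cardinal.mk_le_mk_of_subset h1
  · intro i him
    calc #(⋃ k : Fin (i + 1), t (k : ℕ))
        ≤ #(Fin (i + 1)) * ⨆ k : Fin (i + 1), #(t (k : ℕ)) :=
          Cardinal.mk_iUnion_le _
      _ ≤ ℵ₀ * Cardinal.aleph i := by
          have h1 : #(Fin (i + 1)) ≤ ℵ₀ := by
            simpa using (Cardinal.nat_lt_aleph0 (i+1)).le
          have h2 : (⨆ k : Fin (i + 1), #(t (k : ℕ))) ≤ Cardinal.aleph i := by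
            refine ciSup_le fun k => ?_
            rw [ht]
            refine Cardinal.aleph_le_aleph.mpr ?_
            exact_mod_cast (by omega : min (k : ℕ) m ≤ i)
          exact mul_le_mul' h1 h2
      _ = Cardinal.aleph i := by
          rw [Cardinal.mul_eq_max le_rfl (Cardinal.aleph0_le_aleph _)]
          exact max_eq_right (Cardinal.aleph0_le_aleph _)

set_option maxHeartbeats 1000000 in
lemma exists_seq (m : ℕ) (S : Finset (OmegaN m) → Finset (OmegaN m))
    (C : ℕ → Set (OmegaN m)) (Cmono : Monotone C)
    (Clow : ∀ i ≤ m, Cardinal.aleph i ≤ #(C i)) (Chigh : ∀ i ≤ m, #(C i) ≤ Cardinal.aleph i) :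
    ∀ j ≤ m, ∃ y : ℕ → OmegaN m,
      (∀ i < j, y i ∈ C (m - i)) ∧
      (∀ i < j, ∀ i' < j, y i = y i' → i = i') ∧
      (∀ i < j, ∀ F : Finset (OmegaN m),
        (↑F : Set (OmegaN m)) ⊆ {z | ∃ i' < i, z = y i'} ∪ C (m - i - 1) → y i ∉ S F) := by
  intro j
  induction j with
  | zero =>
    intro _
    exact ⟨fun _ => Classical.arbitrary _, by omega, by omega, by omega⟩
  | succ j ih =>
    intro hj1
    obtain ⟨y, hy1, hy2, hy3⟩ := ih (by omega)
    have hjm : j < m := hj1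
    -- the set of points available when later elements are chosen
    set T : Set (OmegaN m) := {z | ∃ i' < j, z = y i'} ∪ C (m - j - 1) with hT
    have hTcard : #T ≤ Cardinal.aleph ((m - j - 1 : ℕ) : Ordinal) := by
      have h1 : #({z | ∃ i' < j, z = y i'} : Set (OmegaN m)) ≤ ℵ₀ := by
        have : ({z | ∃ i' < j, z = y i'} : Set (OmegaN m)) = y '' {i' | i' < j} := by
          ext z; simp [eq_comm]
        rw [this]
        exact (Cardinal.mk_image_le).trans ((Cardinal.mk_le_mk_of_subset (Set.subset_univ _)).trans (by simpa using le_rfl))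
      calc #T ≤ _ + _ := Cardinal.mk_union_le _ _
        _ ≤ Cardinal.aleph ((m - j - 1 : ℕ) : Ordinal) + Cardinal.aleph ((m - j - 1 : ℕ) : Ordinal) := by
            refine add_le_add (h1.trans (Cardinal.aleph0_le_aleph _)) ?_
            exact Chigh _ (by omega)
        _ = _ := Cardinal.add_eq_self (Cardinal.aleph0_le_aleph _)
    have hTinf : Infinite T := by
      rw [← Cardinal.aleph0_le_mk_iff]
      refine (Cardinal.aleph0_le_aleph (m - j - 1 : ℕ)).trans ?_
      refine (Clow _ (by omega)).trans (Cardinal.mk_le_mk_of_subset ?_)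
      exact Set.subset_union_right
    set Bad : Set (OmegaN m) :=
      ⋃ F : Finset T, (↑(S (F.image Subtype.val)) : Set (OmegaN m)) with hBad
    have hBadcard : #Bad ≤ Cardinal.aleph ((m - j - 1 : ℕ) : Ordinal) := by
      calc #Bad ≤ #(Finset T) * ⨆ F : Finset T, #(↑(S (F.image Subtype.val)) : Set (OmegaN m)) :=
            Cardinal.mk_iUnion_le _
        _ ≤ Cardinal.aleph ((m - j - 1 : ℕ) : Ordinal) * ℵ₀ := by
            refine mul_le_mul' ((Cardinal.mk_finset_of_infinite _).le.trans hTcard) ?_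
            refine ciSup_le fun F => ?_
            exact (Cardinal.lt_aleph0_of_finite _).le
        _ = _ := by
            rw [Cardinal.mul_eq_max (Cardinal.aleph0_le_aleph _) le_rfl]
            exact max_eq_left (Cardinal.aleph0_le_aleph _)
    -- choose the new point
    have hz : ∃ z ∈ C (m - j), z ∉ Bad ∪ {w | ∃ i' < j, w = y i'} := by
      by_contra hcon
      push_neg at hcon
      have hsub : C (m - j) ⊆ Bad ∪ {w | ∃ i' < j, w = y i'} := fun z hzC => hcon z hzC
      have h1 : Cardinal.aleph ((m - j : ℕ) : Ordinal) ≤ #(Bad ∪ {w | ∃ i' < j, w = y i'} : Set (OmegaN m)) :=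
        (Clow _ (by omega)).trans (Cardinal.mk_le_mk_of_subset hsub)
      have h2 : #(Bad ∪ {w | ∃ i' < j, w = y i'} : Set (OmegaN m)) ≤ Cardinal.aleph ((m - j - 1 : ℕ) : Ordinal) := by
        calc _ ≤ _ + _ := Cardinal.mk_union_le _ _
          _ ≤ Cardinal.aleph ((m - j - 1 : ℕ) : Ordinal) + Cardinal.aleph ((m - j - 1 : ℕ) : Ordinal) := by
              refine add_le_add hBadcard ?_
              have : ({w | ∃ i' < j, w = y i'} : Set (OmegaN m)) = y '' {i' | i' < j} := by
                ext z; simp [eq_comm]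
              rw [this]
              refine (Cardinal.mk_image_le).trans ?_
              refine ((Cardinal.mk_le_mk_of_subset (Set.subset_univ _)).trans ?_).trans
                (Cardinal.aleph0_le_aleph _)
              simpa using le_rfl
          _ = _ := Cardinal.add_eq_self (Cardinal.aleph0_le_aleph _)
      have h3 : Cardinal.aleph ((m - j - 1 : ℕ) : Ordinal) < Cardinal.aleph ((m - j : ℕ) : Ordinal) := by
        refine Cardinal.aleph_lt_aleph.mpr ?_
        exact_mod_cast (by omega : m - j - 1 < m - j)
      exact absurd (h1.trans h2) (not_le.mpr h3)
    obtain ⟨z, hzC, hzn⟩ := hz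
    rw [Set.mem_union] at hzn
    push_neg at hzn
    obtain ⟨hznBad, hznprev⟩ := hzn
    refine ⟨Function.update y j z, ?_, ?_, ?_⟩
    · intro i hi
      rcases Nat.lt_succ_iff_lt_or_eq.mp hi with hi | rfl
      · rw [Function.update_of_ne (by omega)]; exact hy1 i hi
      · rw [Function.update_self]; exact hzC
    · intro i hi i' hi' heq
      rcases Nat.lt_succ_iff_lt_or_eq.mp hi with hi | rfl <;>
        rcases Nat.lt_succ_iff_lt_or_eq.mp hi' with hi' | rfl
      · rw [Function.update_of_ne (by omega), Function.update_of_ne (by omega)] at heq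
        exact hy2 i hi i' hi' heq
      · rw [Function.update_of_ne (by omega), Function.update_self] at heq
        exact absurd ⟨i, hi, heq.symm⟩ hznprev
      · rw [Function.update_self, Function.update_of_ne (by omega)] at heq
        exact absurd ⟨i', hi', heq⟩ hznprev
      · rfl
    · intro i hi F hF
      rcases Nat.lt_succ_iff_lt_or_eq.mp hi with hi | rfl
      · rw [Function.update_of_ne (by omega)]
        refine hy3 i hi F ?_
        intro w hw
        rcases hF hw with hw' | hw'
        · obtain ⟨i', hi'lt, rfl⟩ := hw'
          exact Or.inl ⟨i', hi'lt, by rw [Function.update_of_ne (by omega)]⟩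
        · exact Or.inr hw'
      · rw [Function.update_self]
        -- F ⊆ T
        have hFT : (↑F : Set (OmegaN m)) ⊆ T := by
          intro w hw
          rcases hF hw with hw' | hw'
          · obtain ⟨i', hi'lt, rfl⟩ := hw'
            exact Or.inl ⟨i', hi'lt, by rw [Function.update_of_ne (by omega)]⟩
          · exact Or.inr hw'
        intro hzS
        apply hznBad
        rw [hBad]
        refine Set.mem_iUnion.mpr ⟨F.attach.image (fun x => (⟨x.1, hFT x.2⟩ : T)), ?_⟩
        have : (F.attach.image (fun x => (⟨x.1, hFT x.2⟩ : T))).image Subtype.val = F := by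
          rw [Finset.image_image]
          exact Finset.attach_image_val
        rw [this]
        exact hzS

lemma isFree_card {α : Type*} [DecidableEq α] (𝓕 : Finset (Finset α)) :
    IsFree 𝓕 ((𝓕.sup id).card) := by
  classical
  intro S
  obtain ⟨C, Cmono, Clow, Chigh⟩ := exists_chain ((𝓕.sup id).card)
  obtain ⟨y, hy1, hy2, hy3⟩ :=
    exists_seq ((𝓕.sup id).card) S C Cmono Clow Chigh ((𝓕.sup id).card) le_rfl
  have e := (𝓕.sup id).equivFin
  refine ⟨fun x => if hx : x ∈ 𝓕.sup id then y ((e ⟨x, hx⟩ : Fin _) : ℕ)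
      else Classical.arbitrary _, ?_, ?_⟩
  · intro x₁ hx₁ x₂ hx₂ heq
    rw [Finset.mem_coe] at hx₁ hx₂
    simp only at heq
    rw [dif_pos hx₁, dif_pos hx₂] at heq
    have h1 := hy2 _ (e ⟨x₁, hx₁⟩).isLt _ (e ⟨x₂, hx₂⟩).isLt heq
    exact congrArg Subtype.val (e.injective (Fin.ext h1))
  · intro A hA w hw
    set u : α → OmegaN ((𝓕.sup id).card) := fun x =>
      if hx : x ∈ 𝓕.sup id then y ((e ⟨x, hx⟩ : Fin _) : ℕ) else Classical.arbitrary _ with hu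
    have hux : ∀ x (hx : x ∈ 𝓕.sup id), u x = y ((e ⟨x, hx⟩ : Fin _) : ℕ) := by
      intro x hx; simp only [hu, dif_pos hx]
    rw [Finset.mem_inter] at hw
    obtain ⟨hw1, hw2⟩ := hw
    rw [Finset.mem_image] at hw2
    obtain ⟨x, hxX, rfl⟩ := hw2
    by_cases hxA : x ∈ A
    · exact Finset.mem_image_of_mem u hxA
    exfalso
    have hAX : A ⊆ 𝓕.sup id := Finset.le_sup (f := id) hA
    have him : ((e ⟨x, hxX⟩ : Fin _) : ℕ) < (𝓕.sup id).card := (e ⟨x, hxX⟩).isLt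
    have hF : (↑(A.image u) : Set (OmegaN ((𝓕.sup id).card))) ⊆
        {z | ∃ i' < ((e ⟨x, hxX⟩ : Fin _) : ℕ), z = y i'} ∪
          C ((𝓕.sup id).card - ((e ⟨x, hxX⟩ : Fin _) : ℕ) - 1) := by
      intro w hw
      rw [Finset.coe_image] at hw
      obtain ⟨a, ha, rfl⟩ := hw
      rw [Finset.mem_coe] at ha
      have haX : a ∈ 𝓕.sup id := hAX ha
      have hiam : ((e ⟨a, haX⟩ : Fin _) : ℕ) < (𝓕.sup id).card := (e ⟨a, haX⟩).isLt
      have hne : ((e ⟨a, haX⟩ : Fin _) : ℕ) ≠ ((e ⟨x, hxX⟩ : Fin _) : ℕ) := by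
        intro hcon
        have h2 : (⟨a, haX⟩ : ↥(𝓕.sup id)) = ⟨x, hxX⟩ := e.injective (Fin.ext hcon)
        have h3 : a = x := congrArg Subtype.val h2
        exact hxA (h3 ▸ ha)
      rw [hux a haX]
      rcases lt_or_gt_of_ne hne with hlt | hgt
      · exact Or.inl ⟨_, hlt, rfl⟩
      · refine Or.inr (Cmono ?_ (hy1 _ hiam))
        omega
    have := hy3 _ him (A.image u) hF
    rw [← hux x hxX] at this
    exact this hw1

lemma isFree_trans {α : Type*} [DecidableEq α] (𝓕 𝓕' : Finset (Finset α))
    (h : ∀ A ∈ 𝓕, ∃ G : Finset (Finset α), G ⊆ 𝓕' ∧ ∃ hG : G.Nonempty, A = G.inf' hG id)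
    (n : ℕ) (hfree : IsFree 𝓕' n) : IsFree 𝓕 n := by
  classical
  intro S
  obtain ⟨u, huinj, hu⟩ := hfree (fun Cs => Cs.powerset.sup S)
  have hXX : (𝓕.sup id : Finset α) ⊆ 𝓕'.sup id := by
    intro x hx
    rw [Finset.mem_sup] at hx ⊢
    obtain ⟨A, hA, hxA⟩ := hx
    obtain ⟨G, hGsub, hGne, hAeq⟩ := h A hA
    obtain ⟨B, hB⟩ := hGne
    refine ⟨B, hGsub hB, ?_⟩
    have hAB : A ⊆ B := by
      rw [hAeq]
      intro z hz
      exact (Finset.mem_inf' _).mp hz B hB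
    exact hAB hxA
  refine ⟨u, huinj.mono (Finset.coe_subset.mpr hXX), ?_⟩
  intro A hA w hw
  rw [Finset.mem_inter] at hw
  obtain ⟨hw1, hw2⟩ := hw
  rw [Finset.mem_image] at hw2
  obtain ⟨x, hxX, rfl⟩ := hw2
  obtain ⟨G, hGsub, hGne, hAeq⟩ := h A hA
  have hxB : ∀ B ∈ G, x ∈ B := by
    intro B hB
    have hAB : A ⊆ B := by
      rw [hAeq]; intro z hz; exact (Finset.mem_inf' _).mp hz B hB
    have hSle : S (A.image u) ⊆ (B.image u).powerset.sup S :=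
      Finset.le_sup (Finset.mem_powerset.mpr (Finset.image_subset_image hAB))
    have hw2' : u x ∈ (𝓕'.sup id).image u := Finset.mem_image_of_mem u (hXX hxX)
    have hmem := hu B (hGsub hB) (Finset.mem_inter.mpr ⟨hSle hw1, hw2'⟩)
    rw [Finset.mem_image] at hmem
    obtain ⟨b, hbB, hbeq⟩ := hmem
    have hbX : b ∈ 𝓕'.sup id := (Finset.le_sup (f := id) (hGsub hB) : B ⊆ 𝓕'.sup id) hbB
    have : b = x := huinj (Finset.mem_coe.mpr hbX) (Finset.mem_coe.mpr (hXX hxX)) hbeq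
    exact this ▸ hbB
  have hxA : x ∈ A := by
    rw [hAeq]
    exact (Finset.mem_inf' hGne).mpr hxB
  exact Finset.mem_image_of_mem u hxA


/-- If every member of `𝓕` is an intersection of a nonempty subfamily of `𝓕'`,
then `𝔣𝔯 𝓕 ≤ 𝔣𝔯 𝓕'`. -/
theorem statement4 {α : Type*} [DecidableEq α] (𝓕 𝓕' : Finset (Finset α))
    (h : ∀ A ∈ 𝓕, ∃ G : Finset (Finset α), G ⊆ 𝓕' ∧ ∃ hG : G.Nonempty, A = G.inf' hG id) :
    fr 𝓕 ≤ fr 𝓕' := by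
  have hne : {n | IsFree 𝓕' n}.Nonempty := ⟨_, isFree_card 𝓕'⟩
  have hmem : fr 𝓕' ∈ {n | IsFree 𝓕' n} := Nat.sInf_mem hne
  exact Nat.sInf_le (isFree_trans 𝓕 𝓕' h _ hmem)

end
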